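/- Suppose β, γ, α, κ₁, κ₃, c are smooth real-valued functions/constants on an interval (with c a nonzero constant) satisfying along a direction derivative D: γκ₃ = βκ₁ + c/4, Dα = β(α + κ₃), Dβ = β² + βκ₁ + c/2, Dγ = κ₁γ + βγ, and the algebraic relation αγ = β². Then c = 0, a contradiction; hence no such configuration with β ≠ 0 exists. -/

import Mathlib

theorem stmt_11 (c : ℝ) (hc : c ≠ 0) (α β γ κ₁ κ₃ : ℝ → ℝ)
    (hα : Differentiable ℝ α) (hβ : Differentiable ℝ β) (hγ : Differentiable ℝ γ)
    (hβ0 : ∀ t, β t ≠ 0)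
    (h1 : ∀ t, γ t * κ₃ t = β t * κ₁ t + c / 4)
    (h2 : ∀ t, deriv α t = β t * (α t + κ₃ t))
    (h3 : ∀ t, deriv β t = (β t) ^ 2 + β t * κ₁ t + c / 2)
    (h4 : ∀ t, deriv γ t = κ₁ t * γ t + β t * γ t)
    (h5 : ∀ t, α t * γ t = (β t) ^ 2) :
    False := by
  have hfun : (fun t => α t * γ t) = fun t => (β t) ^ 2 := funext h5
  have hd : deriv (fun t => α t * γ t) 0 = deriv (fun t => (β t) ^ 2) 0 := by rw [hfun]
  rw [deriv_fun_mul (hα 0) (hγ 0)] at hd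
  have hp : deriv (fun t => (β t) ^ 2) 0 = 2 * β 0 * deriv β 0 := by
    have : deriv (fun t => (β t) ^ 2) 0 = _ := ((hβ 0).hasDerivAt.pow 2).deriv
    simpa [mul_comm, mul_assoc, mul_left_comm] using this
  rw [hp, h2, h3, h4] at hd
  have e1 := h1 0
  have e5 := h5 0
  have hb := hβ0 0
  have key : β 0 * c * (3 / 4) = 0 := by linear_combination (2 * β 0 + κ₁ 0) * e5 + β 0 * e1 - hd
  rcases mul_eq_zero.1 key with h | h
  · rcases mul_eq_zero.1 h with h' | h'
    · exact hb h'
    · exact hc h'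
  · norm_num at h
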